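/- arXiv:1608.06998 — 5 statements merged into one kernel-verified Lean document; each statement's English description precedes it below -/
import Mathlib

section
/- For any fixed real y ≥ 2, the function g(x,y) = f(x+1,y) - f(x,y) is increasing in x for x ≥ 1, where f(x,y) = sqrt((x+y-2)/(x·y)). -/
open Set Real Filter

theorem g_monotone_of_y_ge_two (y : ℝ) (hy : 2 ≤ y) :
    MonotoneOn (fun x : ℝ =>
      Real.sqrt ((x + 1 + y - 2) / ((x + 1) * y)) - Real.sqrt ((x + y - 2) / (x * y)))
      (Set.Ici 1) := by
  have hy0 : (0:ℝ) < y := by linarith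
  set f : ℝ → ℝ := fun x => Real.sqrt ((x + y - 2) / (x * y)) with hf
  have hu : ∀ x : ℝ, 0 < x → 0 < (x + y - 2) / (x * y) := by
    intro x hx
    exact div_pos (by linarith) (by positivity)
  set F1 : ℝ → ℝ := fun x => (2 - y) / (x ^ 2 * y) / (2 * Real.sqrt ((x + y - 2) / (x * y)))
    with hF1def
  have hd1 : ∀ x : ℝ, 0 < x → HasDerivAt f (F1 x) x := by
    intro x hx
    have hne : x * y ≠ 0 := by positivity
    have h1 : HasDerivAt (fun x : ℝ => x + y - 2) 1 x := by
      simpa using ((hasDerivAt_id x).add_const y).sub_const 2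
    have h2 : HasDerivAt (fun x : ℝ => x * y) y x := by
      simpa using (hasDerivAt_id x).mul_const y
    have hux : HasDerivAt (fun x : ℝ => (x + y - 2) / (x * y)) ((2 - y) / (x ^ 2 * y)) x := by
      refine (h1.div h2 hne).congr_deriv ?_
      field_simp
      ring
    have := hux.sqrt (ne_of_gt (hu x hx))
    exact this
  have hd2 : ∀ x : ℝ, 0 < x → HasDerivAt F1
      ((y - 2) * (4 * x + 3 * y - 6) /
        (4 * x ^ 4 * y ^ 2 * Real.sqrt ((x + y - 2) / (x * y)) ^ 3)) x := by
    intro x hx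
    have hs0 : 0 < Real.sqrt ((x + y - 2) / (x * y)) := Real.sqrt_pos.mpr (hu x hx)
    have hne : x * y ≠ 0 := by positivity
    have h1 : HasDerivAt (fun x : ℝ => x + y - 2) 1 x := by
      simpa using ((hasDerivAt_id x).add_const y).sub_const 2
    have h2 : HasDerivAt (fun x : ℝ => x * y) y x := by
      simpa using (hasDerivAt_id x).mul_const y
    have hux : HasDerivAt (fun x : ℝ => (x + y - 2) / (x * y)) ((2 - y) / (x ^ 2 * y)) x := by
      refine (h1.div h2 hne).congr_deriv ?_
      field_simp
      ring
    have hN : HasDerivAt (fun x : ℝ => (2 - y) / (x ^ 2 * y)) (2 * (y - 2) / (x ^ 3 * y)) x := by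
      have h := (hasDerivAt_const x (2 - y)).div ((hasDerivAt_pow 2 x).mul_const y)
        (by positivity : x ^ 2 * y ≠ 0)
      refine h.congr_deriv ?_
      field_simp
      ring
    have hD : HasDerivAt (fun x : ℝ => 2 * Real.sqrt ((x + y - 2) / (x * y)))
        (2 * ((2 - y) / (x ^ 2 * y) / (2 * Real.sqrt ((x + y - 2) / (x * y))))) x :=
      (hux.sqrt (ne_of_gt (hu x hx))).const_mul 2
    have hF := hN.div hD (by positivity)
    refine hF.congr_deriv (Eq.symm ?_)
    have hs2 : Real.sqrt ((x + y - 2) / (x * y)) ^ 2 = (x + y - 2) / (x * y) :=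
      Real.sq_sqrt (hu x hx).le
    set s := Real.sqrt ((x + y - 2) / (x * y)) with hs
    have hs2' : s ^ 2 * (x * y) = x + y - 2 := by
      rw [hs2]; field_simp
    calc (y - 2) * (4 * x + 3 * y - 6) / (4 * x ^ 4 * y ^ 2 * s ^ 3)
        = (4 * (y - 2) * (s ^ 2 * (x * y)) - (y - 2) ^ 2) / (4 * x ^ 4 * y ^ 2 * s ^ 3) := by
          rw [hs2']; ring
      _ = (2 * (y - 2) / (x ^ 3 * y) * (2 * s) -
            (2 - y) / (x ^ 2 * y) * (2 * ((2 - y) / (x ^ 2 * y) / (2 * s)))) / (2 * s) ^ 2 := by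
          field_simp
          ring
  have hconv : ConvexOn ℝ (Set.Ioi (0:ℝ)) f := by
    apply convexOn_of_deriv2_nonneg (convex_Ioi 0)
    · intro x hx
      exact (hd1 x hx).continuousAt.continuousWithinAt
    · rw [interior_Ioi]
      intro x hx
      exact (hd1 x hx).differentiableAt.differentiableWithinAt
    · rw [interior_Ioi]
      intro x hx
      have hev : deriv f =ᶠ[nhds x] F1 :=
        Filter.eventuallyEq_of_mem (isOpen_Ioi.mem_nhds hx) fun z hz => (hd1 z hz).deriv
      exact ((hd2 x hx).differentiableAt.congr_of_eventuallyEq hev).differentiableWithinAt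
    · rw [interior_Ioi]
      intro x hx
      have hev : deriv f =ᶠ[nhds x] F1 :=
        Filter.eventuallyEq_of_mem (isOpen_Ioi.mem_nhds hx) fun z hz => (hd1 z hz).deriv
      have h2 : deriv^[2] f x = deriv (deriv f) x := rfl
      rw [h2, hev.deriv_eq, (hd2 x hx).deriv]
      have hs0 : (0:ℝ) ≤ Real.sqrt ((x + y - 2) / (x * y)) := Real.sqrt_nonneg _
      have hx' : (0:ℝ) < x := hx
      apply div_nonneg
      · apply mul_nonneg <;> linarith
      · positivity
  intro a ha b hb hab
  simp only [Set.mem_Ici] at ha hb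
  show f (a + 1) - f a ≤ f (b + 1) - f b
  rcases eq_or_lt_of_le hab with rfl | hab
  · exact le_rfl
  have ma : a ∈ Set.Ioi (0:ℝ) := by simp; linarith
  have mb : b ∈ Set.Ioi (0:ℝ) := by simp; linarith
  have ma1 : a + 1 ∈ Set.Ioi (0:ℝ) := by simp; linarith
  have mb1 : b + 1 ∈ Set.Ioi (0:ℝ) := by simp; linarith
  have h1 := hconv.secant_mono ma ma1 mb1 (by linarith) (by linarith) (by linarith)
  have h2 := hconv.secant_mono mb1 ma mb (by linarith) (by linarith) hab.le
  have e0 : (f (a + 1) - f a) / (a + 1 - a) = f (a + 1) - f a := by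
    rw [show a + 1 - a = 1 by ring, div_one]
  have e1 : (f (b + 1) - f a) / (b + 1 - a) = (f a - f (b + 1)) / (a - (b + 1)) := by
    rw [← neg_div_neg_eq]; ring_nf
  have e2 : (f b - f (b + 1)) / (b - (b + 1)) = f (b + 1) - f b := by
    rw [show b - (b + 1) = -1 by ring]
    field_simp
    ring
  rw [e0, e1] at h1
  rw [e2] at h2
  linarith
end

section
/- For any fixed real m ≥ 1 and reals x₁ ≥ x₂ ≥ 1, we have F(x₁+1) - F(x₁) > F(x₂) - F(x₂-1), where F(x) = x·sqrt((x+m-1)/(x+m)). -/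
open Real Set

lemma Faux_deriv1 (m : ℝ) (hm : 1 ≤ m) {x : ℝ} (hx : 0 < x) :
    HasDerivAt (fun y => y * Real.sqrt (y + m - 1) / Real.sqrt (y + m))
      ((2 * (x + m - 1) * (x + m) + x) /
        (2 * Real.sqrt (x + m - 1) * Real.sqrt (x + m) * (x + m))) x := by
  have ha : 0 < x + m - 1 := by linarith
  have hb : 0 < x + m := by linarith
  have hsa : 0 < Real.sqrt (x + m - 1) := Real.sqrt_pos.mpr ha
  have hsb : 0 < Real.sqrt (x + m) := Real.sqrt_pos.mpr hb
  have h1 : HasDerivAt (fun y : ℝ => y + m - 1) 1 x := by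
    simpa using ((hasDerivAt_id x).add_const m).sub_const 1
  have h2 : HasDerivAt (fun y : ℝ => y + m) 1 x := by
    simpa using (hasDerivAt_id x).add_const m
  have hs1 : HasDerivAt (fun y : ℝ => Real.sqrt (y + m - 1))
      (1 / (2 * Real.sqrt (x + m - 1)) * 1) x :=
    (Real.hasDerivAt_sqrt ha.ne').comp x h1
  have hs2 : HasDerivAt (fun y : ℝ => Real.sqrt (y + m))
      (1 / (2 * Real.sqrt (x + m)) * 1) x :=
    (Real.hasDerivAt_sqrt hb.ne').comp x h2
  have hnum : HasDerivAt (fun y : ℝ => y * Real.sqrt (y + m - 1))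
      (1 * Real.sqrt (x + m - 1) + x * (1 / (2 * Real.sqrt (x + m - 1)) * 1)) x :=
    (hasDerivAt_id x).mul hs1
  have h := hnum.div hs2 hsb.ne'
  convert h using 1
  · rfl
  · rfl
  · rfl
  have e1 : Real.sqrt (x + m - 1) * Real.sqrt (x + m - 1) = x + m - 1 :=
    Real.mul_self_sqrt ha.le
  have e2 : Real.sqrt (x + m) * Real.sqrt (x + m) = x + m :=
    Real.mul_self_sqrt hb.le
  have f1 : Real.sqrt (x + m - 1) ^ 2 = x + m - 1 := Real.sq_sqrt ha.le
  have f2 : Real.sqrt (x + m) ^ 2 = x + m := Real.sq_sqrt hb.le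
  have f13 : Real.sqrt (x + m - 1) ^ 3 = (x + m - 1) * Real.sqrt (x + m - 1) := by
    rw [pow_succ, f1]
  have f23 : Real.sqrt (x + m) ^ 3 = (x + m) * Real.sqrt (x + m) := by
    rw [pow_succ, f2]
  field_simp
  ring_nf
  ring_nf at f1 f2 f13 f23
  rw [f1, f2]
  ring

lemma Faux_deriv2 (m : ℝ) (hm : 1 ≤ m) {x : ℝ} (hx : 0 < x) :
    HasDerivAt (fun y => (2 * (y + m - 1) * (y + m) + y) /
        (2 * Real.sqrt (y + m - 1) * Real.sqrt (y + m) * (y + m)))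
      (Real.sqrt (x + m) * ((x + m) * (4 * m - 1) - 3 * m) /
        (Real.sqrt (x + m - 1) *
          (2 * Real.sqrt (x + m - 1) * Real.sqrt (x + m) * (x + m)) ^ 2)) x := by
  have ha : 0 < x + m - 1 := by linarith
  have hb : 0 < x + m := by linarith
  have hsa : 0 < Real.sqrt (x + m - 1) := Real.sqrt_pos.mpr ha
  have hsb : 0 < Real.sqrt (x + m) := Real.sqrt_pos.mpr hb
  have h1 : HasDerivAt (fun y : ℝ => y + m - 1) 1 x := by
    simpa using ((hasDerivAt_id x).add_const m).sub_const 1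
  have h2 : HasDerivAt (fun y : ℝ => y + m) 1 x := by
    simpa using (hasDerivAt_id x).add_const m
  have hs1 : HasDerivAt (fun y : ℝ => Real.sqrt (y + m - 1))
      (1 / (2 * Real.sqrt (x + m - 1)) * 1) x :=
    (Real.hasDerivAt_sqrt ha.ne').comp x h1
  have hs2 : HasDerivAt (fun y : ℝ => Real.sqrt (y + m))
      (1 / (2 * Real.sqrt (x + m)) * 1) x :=
    (Real.hasDerivAt_sqrt hb.ne').comp x h2
  have hN : HasDerivAt (fun y : ℝ => 2 * (y + m - 1) * (y + m) + y)
      ((2 * 1 * (x + m) + 2 * (x + m - 1) * 1) + 1) x :=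
    ((h1.const_mul 2).mul h2).add (hasDerivAt_id x)
  have hD : HasDerivAt
      (fun y : ℝ => 2 * Real.sqrt (y + m - 1) * Real.sqrt (y + m) * (y + m))
      ((2 * (1 / (2 * Real.sqrt (x + m - 1)) * 1) * Real.sqrt (x + m) +
          2 * Real.sqrt (x + m - 1) * (1 / (2 * Real.sqrt (x + m)) * 1)) * (x + m) +
        2 * Real.sqrt (x + m - 1) * Real.sqrt (x + m) * 1) x :=
    ((hs1.const_mul 2).mul hs2).mul h2
  have hDne : 2 * Real.sqrt (x + m - 1) * Real.sqrt (x + m) * (x + m) ≠ 0 := by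
    positivity
  have h := hN.div hD hDne
  convert h using 1
  · rfl
  · rfl
  · rfl
  have f1 : Real.sqrt (x + m - 1) ^ 2 = x + m - 1 := Real.sq_sqrt ha.le
  have f2 : Real.sqrt (x + m) ^ 2 = x + m := Real.sq_sqrt hb.le
  have f13 : Real.sqrt (x + m - 1) ^ 3 = (x + m - 1) * Real.sqrt (x + m - 1) := by
    rw [pow_succ, f1]
  have f23 : Real.sqrt (x + m) ^ 3 = (x + m) * Real.sqrt (x + m) := by
    rw [pow_succ, f2]
  have f14 : Real.sqrt (x + m - 1) ^ 4 = (x + m - 1) ^ 2 := by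
    rw [show (4:ℕ) = 2*2 from rfl, pow_mul, f1]
  have f24 : Real.sqrt (x + m) ^ 4 = (x + m) ^ 2 := by
    rw [show (4:ℕ) = 2*2 from rfl, pow_mul, f2]
  have f15 : Real.sqrt (x + m - 1) ^ 5 = (x + m - 1) ^ 2 * Real.sqrt (x + m - 1) := by
    rw [pow_succ, f14]
  have f25 : Real.sqrt (x + m) ^ 5 = (x + m) ^ 2 * Real.sqrt (x + m) := by
    rw [pow_succ, f24]
  field_simp
  ring_nf
  ring_nf at f1 f2 f13 f23 f14 f24 f15 f25
  simp only [f15, f25, f14, f24, f13, f23, f1, f2]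
  ring

lemma Faux_convexOn (m : ℝ) (hm : 1 ≤ m) :
    StrictConvexOn ℝ (Set.Ici (0:ℝ))
      (fun y => y * Real.sqrt (y + m - 1) / Real.sqrt (y + m)) := by
  apply strictConvexOn_of_deriv2_pos (convex_Ici 0)
  · apply ContinuousOn.div
    · fun_prop
    · fun_prop
    · intro y hy
      have hy0 : (0:ℝ) ≤ y := hy
      have : 0 < y + m := by linarith
      exact (Real.sqrt_pos.mpr this).ne'
  · intro y hy
    rw [interior_Ici] at hy
    have hy0 : 0 < y := hy
    show 0 < deriv (deriv (fun y => y * Real.sqrt (y + m - 1) / Real.sqrt (y + m))) y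
    have hEq : deriv (fun y => y * Real.sqrt (y + m - 1) / Real.sqrt (y + m)) =ᶠ[nhds y]
        (fun z => (2 * (z + m - 1) * (z + m) + z) /
          (2 * Real.sqrt (z + m - 1) * Real.sqrt (z + m) * (z + m))) := by
      filter_upwards [isOpen_Ioi.mem_nhds hy] with z hz
      exact (Faux_deriv1 m hm hz).deriv
    rw [hEq.deriv_eq, (Faux_deriv2 m hm hy0).deriv]
    apply div_pos
    · apply mul_pos (Real.sqrt_pos.mpr (by linarith))
      nlinarith
    · have : 0 < Real.sqrt (y + m - 1) := Real.sqrt_pos.mpr (by linarith)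
      positivity

theorem F_increment_inequality (m : ℝ) (hm : 1 ≤ m) (x₁ x₂ : ℝ)
    (hx₂ : 1 ≤ x₂) (hx : x₂ ≤ x₁) :
    (x₁ + 1) * Real.sqrt ((x₁ + 1 + m - 1) / (x₁ + 1 + m)) -
      x₁ * Real.sqrt ((x₁ + m - 1) / (x₁ + m)) >
    x₂ * Real.sqrt ((x₂ + m - 1) / (x₂ + m)) -
      (x₂ - 1) * Real.sqrt ((x₂ - 1 + m - 1) / (x₂ - 1 + m)) := by
  set g : ℝ → ℝ := fun y => y * Real.sqrt (y + m - 1) / Real.sqrt (y + m) with hg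
  have hconv := Faux_convexOn m hm
  have hp : (x₂ - 1 : ℝ) ∈ Set.Ici (0:ℝ) := by simp; linarith
  have hs : (x₁ + 1 : ℝ) ∈ Set.Ici (0:ℝ) := by simp; linarith
  have key : g x₂ - g (x₂ - 1) < g (x₁ + 1) - g x₁ := by
    simp only [hg]
    rcases eq_or_lt_of_le hx with heq | hlt
    · subst heq
      have h := hconv.slope_strict_mono_adjacent hp hs
        (show x₂ - 1 < x₂ by linarith) (show x₂ < x₂ + 1 by linarith)
      rw [show x₂ - (x₂ - 1) = 1 by ring, show x₂ + 1 - x₂ = 1 by ring,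
        div_one, div_one] at h
      linarith
    · have h1 := hconv.slope_strict_mono_adjacent hp
        (show (x₁:ℝ) ∈ Set.Ici (0:ℝ) by simp; linarith)
        (show x₂ - 1 < x₂ by linarith) hlt
      have h2 := hconv.slope_strict_mono_adjacent
        (show (x₂:ℝ) ∈ Set.Ici (0:ℝ) by simp; linarith) hs
        hlt (show x₁ < x₁ + 1 by linarith)
      rw [show x₂ - (x₂ - 1) = 1 by ring, div_one] at h1
      rw [show x₁ + 1 - x₁ = 1 by ring, div_one] at h2
      linarith [h1, h2]
  rw [Real.sqrt_div (show (0:ℝ) ≤ x₁ + 1 + m - 1 by linarith),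
    Real.sqrt_div (show (0:ℝ) ≤ x₁ + m - 1 by linarith),
    Real.sqrt_div (show (0:ℝ) ≤ x₂ + m - 1 by linarith),
    Real.sqrt_div (show (0:ℝ) ≤ x₂ - 1 + m - 1 by linarith)]
  simp only [hg] at key
  ring_nf at key ⊢
  linarith [key]
end

section
/- Let G be a connected simple graph on n vertices with independence number β. Then ABC(G) ≤ β(n-β)·sqrt((2n-β-3)/((n-β)(n-1))) + ((n-β)(n-β-1)/2)·sqrt((2n-4)/((n-1)²)), with equality if and only if G is isomorphic to the join of the empty graph on β vertices with the complete graph K_{n-β}. -/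
/-- The degree of a vertex. -/
noncomputable def deg {V : Type*} (G : SimpleGraph V) (v : V) : ℕ :=
  Nat.card {w | G.Adj v w}

open scoped Classical in
/-- The atom-bond connectivity index:
`ABC(G) = ∑_{uv ∈ E(G)} sqrt((d(u)+d(v)-2)/(d(u)d(v)))`,
computed as half the sum over ordered adjacent pairs. -/
noncomputable def ABC {V : Type*} [Fintype V] (G : SimpleGraph V) : ℝ :=
  (∑ u : V, ∑ v : V, if G.Adj u v then
    Real.sqrt (((deg G u : ℝ) + (deg G v : ℝ) - 2) / ((deg G u : ℝ) * (deg G v : ℝ)))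
  else 0) / 2

open scoped Classical in
/-- The independence number: the largest size of a set of pairwise non-adjacent vertices. -/
noncomputable def indepNum {V : Type*} [Fintype V] (G : SimpleGraph V) : ℕ :=
  Finset.univ.sup fun s : Finset V =>
    if (∀ u ∈ s, ∀ v ∈ s, u ≠ v → ¬ G.Adj u v) then s.card else 0

/-- The join of the empty graph on `β` vertices with `K_{n-β}`:
the first `β` vertices are independent, the rest form a clique, with all cross edges. -/
def splitGraph (n β : ℕ) : SimpleGraph (Fin n) where
  Adj u v := u ≠ v ∧ (β ≤ u.val ∨ β ≤ v.val)
  symm := by constructor; intro u v h; exact ⟨h.1.symm, h.2.symm⟩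
  loopless := by constructor; intro u h; exact h.1 rfl


open Real

noncomputable def fB (a b : ℝ) : ℝ := Real.sqrt ((a + b - 2) / (a * b))

lemma sqrt_shift_le {a b h : ℝ} (hb : 0 ≤ b) (hh : 0 ≤ h) (hba : b ≤ a) :
    Real.sqrt (a + h) + Real.sqrt b ≤ Real.sqrt a + Real.sqrt (b + h) := by
  have ha : 0 ≤ a := hb.trans hba
  have h1 : Real.sqrt (a + h) * Real.sqrt b ≤ Real.sqrt a * Real.sqrt (b + h) := by
    rw [← Real.sqrt_mul (by linarith) b, ← Real.sqrt_mul ha (b + h)]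
    exact Real.sqrt_le_sqrt (by nlinarith)
  nlinarith [Real.sq_sqrt (show (0:ℝ) ≤ a + h by linarith), Real.sq_sqrt hb,
    Real.sq_sqrt ha, Real.sq_sqrt (show (0:ℝ) ≤ b + h by linarith),
    Real.sqrt_nonneg (a + h), Real.sqrt_nonneg b, Real.sqrt_nonneg a, Real.sqrt_nonneg (b + h)]

lemma sqrt_diff_mono {u₁ u₂ c₁ c₂ : ℝ} (hu : u₂ ≤ u₁) (hu2 : 0 ≤ u₂)
    (hc1 : 0 ≤ c₁) (hc : c₁ ≤ c₂) :
    Real.sqrt (u₁ + c₁) - Real.sqrt u₁ ≤ Real.sqrt (u₂ + c₂) - Real.sqrt u₂ := by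
  have h1 : Real.sqrt (u₁ + c₁) ≤ Real.sqrt (u₁ + c₂) := Real.sqrt_le_sqrt (by linarith)
  have h2 := sqrt_shift_le (h := c₂) hu2 (hc1.trans hc) hu
  linarith

lemma drop_le {d a : ℕ} (hd : 1 ≤ d) (ha : 1 ≤ a) :
    fB d a - fB (d + 1) a ≤ Real.sqrt (1 / (d:ℝ)) - Real.sqrt (1 / ((d:ℝ) + 1)) := by
  have had : (0:ℝ) < a := by exact_mod_cast ha
  rcases eq_or_lt_of_le hd with h1 | h2
  · -- d = 1
    have hd1 : (d:ℝ) = 1 := by exact_mod_cast h1.symm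
    rw [hd1]
    have e1 : fB 1 a = Real.sqrt (((a:ℝ) - 1) / a) := by
      unfold fB; congr 1; ring
    have e2 : fB (1+1) a = Real.sqrt (1/2 : ℝ) := by
      unfold fB
      congr 1
      field_simp
      ring
    rw [e1, e2]
    have h3 : Real.sqrt (((a:ℝ) - 1) / a) ≤ 1 :=
      Real.sqrt_le_one.mpr (by rw [div_le_one had]; linarith)
    have h4 : Real.sqrt (1/(1:ℝ)) = 1 := by norm_num
    have h5 : (1:ℝ)/(1+1) = 1/2 := by norm_num
    rw [h5, h4]
    linarith
  · -- 2 ≤ d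
    have hd2 : (2:ℝ) ≤ d := by exact_mod_cast h2
    have hdp : (0:ℝ) < d := by linarith
    have e1 : ((d:ℝ) + a - 2) / (d * a) = 1/(d:ℝ) + ((d:ℝ) - 2)/((d:ℝ)*a) := by
      field_simp; ring
    have e2 : (((d:ℝ)+1) + a - 2) / (((d:ℝ)+1) * a) = 1/((d:ℝ)+1) + ((d:ℝ) - 1)/(((d:ℝ)+1)*a) := by
      field_simp
      ring
    unfold fB
    rw [e1, e2]
    have := sqrt_diff_mono (u₁ := 1/(d:ℝ)) (u₂ := 1/((d:ℝ)+1))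
      (c₁ := ((d:ℝ)-2)/((d:ℝ)*a)) (c₂ := ((d:ℝ)-1)/(((d:ℝ)+1)*a))
      (by apply one_div_le_one_div_of_le hdp; linarith)
      (by positivity)
      (by apply div_nonneg (by linarith) (by positivity))
      (by rw [div_le_div_iff₀ (by positivity) (by positivity)]; nlinarith)
    linarith

lemma gbound {d : ℝ} (hd : 1 ≤ d) :
    d * (Real.sqrt (1/d) - Real.sqrt (1/(d+1))) < Real.sqrt (1/(d+1)) / 2 := by
  have hd0 : (0:ℝ) < d := by linarith
  have hd10 : (0:ℝ) < d + 1 := by linarith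
  set s := Real.sqrt d with hs
  set t := Real.sqrt (d+1) with ht
  have hs0 : 0 < s := Real.sqrt_pos.mpr hd0
  have ht0 : 0 < t := Real.sqrt_pos.mpr hd10
  have hs2 : s^2 = d := Real.sq_sqrt hd0.le
  have ht2 : t^2 = d + 1 := Real.sq_sqrt hd10.le
  have hst : s < t := Real.sqrt_lt_sqrt hd0.le (by linarith)
  have e1 : Real.sqrt (1/d) = 1/s := by rw [hs, one_div, one_div, Real.sqrt_inv]
  have e2 : Real.sqrt (1/(d+1)) = 1/t := by rw [ht, one_div, one_div, Real.sqrt_inv]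
  rw [e1, e2]
  have key : d < s * t := by nlinarith
  rw [div_sub_div _ _ (ne_of_gt hs0) (ne_of_gt ht0), one_mul, mul_one, div_div]
  rw [mul_div_assoc']
  rw [div_lt_div_iff₀ (by positivity) (by positivity)]
  -- d * (t - s) * (t * 2) < 1 * (s * t)
  have h2 : (t - s) * (t + s) = 1 := by nlinarith
  nlinarith [mul_pos hs0 ht0, mul_pos ht0 (sub_pos.mpr hst), mul_lt_mul_of_pos_right key ht0]

lemma combine {p q : ℝ} (hp : 2 ≤ p) (hq : 2 ≤ q) :
    Real.sqrt (1/p) / 2 + Real.sqrt (1/q) / 2 ≤ Real.sqrt ((p + q - 2)/(p*q)) := by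
  have hp0 : (0:ℝ) < p := by linarith
  have hq0 : (0:ℝ) < q := by linarith
  set sp := Real.sqrt p with hsp
  set sq := Real.sqrt q with hsq
  set r := Real.sqrt (p + q - 2) with hr
  have hsp0 : 0 < sp := Real.sqrt_pos.mpr hp0
  have hsq0 : 0 < sq := Real.sqrt_pos.mpr hq0
  have hr0 : 0 ≤ r := Real.sqrt_nonneg _
  have hsp2 : sp^2 = p := Real.sq_sqrt hp0.le
  have hsq2 : sq^2 = q := Real.sq_sqrt hq0.le
  have hr2 : r^2 = p + q - 2 := Real.sq_sqrt (by linarith)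
  have e1 : Real.sqrt (1/p) = 1/sp := by rw [hsp, one_div, one_div, Real.sqrt_inv]
  have e2 : Real.sqrt (1/q) = 1/sq := by rw [hsq, one_div, one_div, Real.sqrt_inv]
  have e3 : Real.sqrt ((p + q - 2)/(p*q)) = r / (sp * sq) := by
    rw [Real.sqrt_div (by linarith : (0:ℝ) ≤ p + q - 2), Real.sqrt_mul hp0.le]
  rw [e1, e2, e3]
  have hkey : sp + sq ≤ 2 * r := by
    nlinarith [sq_nonneg (sp - sq), sq_nonneg (sp + sq), mul_pos hsp0 hsq0]
  have e4 : 1/sp/2 + 1/sq/2 = (sp + sq)/(2*(sp*sq)) := by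
    field_simp; ring
  rw [e4, div_le_div_iff₀ (by positivity) (by positivity)]
  nlinarith [mul_le_mul_of_nonneg_right hkey (le_of_lt (mul_pos hsp0 hsq0))]

lemma gain {dx dy : ℕ} (hx : 1 ≤ dx) (hy : 1 ≤ dy) :
    (dx:ℝ) * (Real.sqrt (1/(dx:ℝ)) - Real.sqrt (1/((dx:ℝ)+1)))
      + (dy:ℝ) * (Real.sqrt (1/(dy:ℝ)) - Real.sqrt (1/((dy:ℝ)+1)))
      < fB ((dx:ℝ)+1) ((dy:ℝ)+1) := by
  have hx' : (1:ℝ) ≤ (dx:ℝ) := by exact_mod_cast hx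
  have hy' : (1:ℝ) ≤ (dy:ℝ) := by exact_mod_cast hy
  have h1 := gbound hx'
  have h2 := gbound hy'
  have h3 := combine (p := (dx:ℝ)+1) (q := (dy:ℝ)+1) (by linarith) (by linarith)
  have h4 : fB ((dx:ℝ)+1) ((dy:ℝ)+1)
      = Real.sqrt (((((dx:ℝ)+1)) + (((dy:ℝ)+1)) - 2) / ((((dx:ℝ)+1)) * (((dy:ℝ)+1)))) := rfl
  rw [h4]
  have h5 : Real.sqrt (1/((dx:ℝ)+1)) / 2 + Real.sqrt (1/((dy:ℝ)+1)) / 2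
      ≤ Real.sqrt (((((dx:ℝ)+1)) + (((dy:ℝ)+1)) - 2) / ((((dx:ℝ)+1)) * (((dy:ℝ)+1)))) := h3
  linarith

lemma fB_comm (a b : ℝ) : fB a b = fB b a := by
  unfold fB; rw [add_comm a b, mul_comm a b]

section Basics
variable {V : Type*} [Fintype V]
open scoped Classical

lemma deg_eq (G : SimpleGraph V) (v : V) : deg G v = G.degree v := by
  rw [deg, ← SimpleGraph.card_neighborSet_eq_degree, Nat.card_eq_fintype_card]
  exact Fintype.card_congr (Equiv.refl _)

lemma one_le_deg_of_adj {G : SimpleGraph V} {u v : V} (h : G.Adj u v) : 1 ≤ deg G u := by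
  rw [deg_eq]
  exact (G.degree_pos_iff_exists_adj u).mpr ⟨v, h⟩

lemma ABC_eq (G : SimpleGraph V) :
    ABC G = (∑ u : V, ∑ v : V, if G.Adj u v then fB (deg G u) (deg G v) else 0) / 2 := rfl

lemma ABC_lt_addEdge (G : SimpleGraph V) {x y : V} (hxy : x ≠ y) (hnadj : ¬ G.Adj x y)
    (hdx : 1 ≤ deg G x) (hdy : 1 ≤ deg G y) :
    ABC G < ABC (G ⊔ SimpleGraph.edge x y) := by
  set G' := G ⊔ SimpleGraph.edge x y with hG'
  have hadj' : ∀ u v, G'.Adj u v ↔ G.Adj u v ∨ (u = x ∧ v = y) ∨ (u = y ∧ v = x) := by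
    intro u v
    rw [hG', SimpleGraph.sup_adj, SimpleGraph.edge_adj]
    constructor
    · rintro (h | ⟨(⟨rfl, rfl⟩ | ⟨rfl, rfl⟩), hne⟩)
      · exact Or.inl h
      · exact Or.inr (Or.inl ⟨rfl, rfl⟩)
      · exact Or.inr (Or.inr ⟨rfl, rfl⟩)
    · rintro (h | ⟨rfl, rfl⟩ | ⟨rfl, rfl⟩)
      · exact Or.inl h
      · exact Or.inr ⟨Or.inl ⟨rfl, rfl⟩, hxy⟩
      · exact Or.inr ⟨Or.inr ⟨rfl, rfl⟩, hxy.symm⟩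
  have hNx : {w | G'.Adj x w} = insert y {w | G.Adj x w} := by
    ext w
    simp only [Set.mem_setOf_eq, Set.mem_insert_iff, hadj']
    tauto
  have hNy : {w | G'.Adj y w} = insert x {w | G.Adj y w} := by
    ext w
    simp only [Set.mem_setOf_eq, Set.mem_insert_iff, hadj']
    have : y ≠ x := hxy.symm; tauto
  have hdx' : deg G' x = deg G x + 1 := by
    rw [deg, deg, Nat.card_coe_set_eq, Nat.card_coe_set_eq, hNx,
      Set.ncard_insert_of_notMem (by simp [hnadj]) (Set.toFinite _)]
  have hdy' : deg G' y = deg G y + 1 := by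
    rw [deg, deg, Nat.card_coe_set_eq, Nat.card_coe_set_eq, hNy,
      Set.ncard_insert_of_notMem (by simp only [Set.mem_setOf_eq]; exact fun h => hnadj h.symm) (Set.toFinite _)]
  have hdo : ∀ v, v ≠ x → v ≠ y → deg G' v = deg G v := by
    intro v hvx hvy
    rw [deg, deg, Nat.card_coe_set_eq, Nat.card_coe_set_eq]
    congr 1
    ext w
    simp only [Set.mem_setOf_eq, hadj']
    have := hvx; have := hvy; tauto
  classical
  set T : V → V → ℝ := fun u v => if G.Adj u v then fB (deg G u) (deg G v) else 0 with hT
  set T' : V → V → ℝ := fun u v => if G'.Adj u v then fB (deg G' u) (deg G' v) else 0 with hT'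
  set D : V → V → ℝ := fun u v => T' u v - T u v with hD
  have hDxy : D x y = fB ((deg G x : ℝ) + 1) ((deg G y : ℝ) + 1) := by
    simp only [hD, hT, hT']
    rw [if_pos ((hadj' x y).mpr (Or.inr (Or.inl ⟨rfl, rfl⟩))), if_neg hnadj, hdx', hdy']
    push_cast
    ring
  have hDsymm : ∀ u v, D u v = D v u := by
    intro u v
    simp only [hD, hT, hT']
    rw [if_congr (G.adj_comm u v) (fB_comm ((deg G u : ℝ)) ((deg G v : ℝ))) rfl,
      if_congr (G'.adj_comm u v) (fB_comm ((deg G' u : ℝ)) ((deg G' v : ℝ))) rfl]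
  have hD0 : ∀ u v, u ≠ x → u ≠ y → v ≠ x → v ≠ y → D u v = 0 := by
    intro u v hux huy hvx hvy
    have hiff : G'.Adj u v ↔ G.Adj u v := by rw [hadj']; tauto
    simp only [hD, hT, hT', hdo u hux huy, hdo v hvx hvy]
    by_cases h : G.Adj u v
    · rw [if_pos (hiff.mpr h), if_pos h, sub_self]
    · rw [if_neg (fun hh => h (hiff.mp hh)), if_neg h, sub_self]
  have hDuu : ∀ u, D u u = 0 := by
    intro u; simp [hD, hT, hT']
  set S : Finset V := Finset.univ \ {x, y} with hS
  have hsplit : ∀ f : V → ℝ, ∑ v, f v = (∑ v ∈ S, f v) + (f x + f y) := by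
    intro f
    rw [← Finset.sum_pair hxy, hS]
    exact (Finset.sum_sdiff (Finset.subset_univ _)).symm
  have hmemS : ∀ v ∈ S, v ≠ x ∧ v ≠ y := by
    intro v hv
    simp only [hS, Finset.mem_sdiff, Finset.mem_insert, Finset.mem_singleton, Finset.mem_univ,
      true_and] at hv
    tauto
  have inner : ∀ u ∈ S, ∑ v, D u v = D u x + D u y := by
    intro u hu
    obtain ⟨hux, huy⟩ := hmemS u hu
    rw [hsplit (D u), Finset.sum_eq_zero (fun v hv => hD0 u v hux huy (hmemS v hv).1 (hmemS v hv).2)]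
    ring
  have key : ∑ u, ∑ v, D u v
      = 2 * ((∑ v ∈ S, D x v) + (∑ v ∈ S, D y v)) + 2 * D x y := by
    rw [hsplit (fun u => ∑ v, D u v)]
    rw [Finset.sum_congr rfl inner]
    rw [hsplit (D x), hsplit (D y)]
    have e1 : ∑ u ∈ S, (D u x + D u y) = (∑ u ∈ S, D x u) + (∑ u ∈ S, D y u) := by
      rw [Finset.sum_add_distrib]
      congr 1
      · exact Finset.sum_congr rfl (fun u _ => hDsymm u x)
      · exact Finset.sum_congr rfl (fun u _ => hDsymm u y)
    rw [e1, hDuu x, hDuu y, hDsymm y x]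
    ring
  have hgen : ∀ z : V, deg G' z = deg G z + 1 → 1 ≤ deg G z →
      (∀ v ∈ S, (G'.Adj z v ↔ G.Adj z v)) →
      ((S.filter (fun v => G.Adj z v)).card = deg G z) →
      -((deg G z : ℝ) * (Real.sqrt (1/(deg G z : ℝ)) - Real.sqrt (1/((deg G z : ℝ)+1))))
        ≤ ∑ v ∈ S, D z v := by
    intro z hz1 hz2 hz3 hz4
    have point : ∀ v ∈ S,
        (if G.Adj z v then
          -(Real.sqrt (1/(deg G z : ℝ)) - Real.sqrt (1/((deg G z : ℝ)+1))) else 0) ≤ D z v := by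
      intro v hv
      obtain ⟨hvx, hvy⟩ := hmemS v hv
      simp only [hD, hT, hT']
      by_cases h : G.Adj z v
      · simp only [if_pos h, if_pos ((hz3 v hv).mpr h), hz1, hdo v hvx hvy]
        have hdrop := drop_le hz2 (one_le_deg_of_adj h.symm)
        push_cast at hdrop ⊢
        linarith
      · simp only [if_neg h, if_neg (fun hh => h ((hz3 v hv).mp hh))]
        norm_num
    calc -((deg G z : ℝ) * (Real.sqrt (1/(deg G z : ℝ)) - Real.sqrt (1/((deg G z : ℝ)+1))))
        = ∑ v ∈ S, (if G.Adj z v then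
            -(Real.sqrt (1/(deg G z : ℝ)) - Real.sqrt (1/((deg G z : ℝ)+1))) else 0) := by
          rw [Finset.sum_ite, Finset.sum_const, Finset.sum_const_zero, add_zero, hz4,
            nsmul_eq_mul]
          ring
      _ ≤ ∑ v ∈ S, D z v := Finset.sum_le_sum point
  have hfx : (S.filter (fun v => G.Adj x v)).card = deg G x := by
    have hfe : S.filter (fun v => G.Adj x v) = G.neighborFinset x := by
      ext w
      simp only [Finset.mem_filter, hS, Finset.mem_sdiff, Finset.mem_univ, true_and,
        Finset.mem_insert, Finset.mem_singleton, SimpleGraph.mem_neighborFinset]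
      constructor
      · tauto
      · intro h
        exact ⟨fun hc => by rcases hc with rfl | rfl; exacts [G.irrefl h, hnadj h], h⟩
    rw [hfe, deg_eq]
    rfl
  have hfy : (S.filter (fun v => G.Adj y v)).card = deg G y := by
    have hfe : S.filter (fun v => G.Adj y v) = G.neighborFinset y := by
      ext w
      simp only [Finset.mem_filter, hS, Finset.mem_sdiff, Finset.mem_univ, true_and,
        Finset.mem_insert, Finset.mem_singleton, SimpleGraph.mem_neighborFinset]
      constructor
      · tauto
      · intro h
        exact ⟨fun hc => by rcases hc with rfl | rfl; exacts [hnadj h.symm, G.irrefl h], h⟩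
    rw [hfe, deg_eq]
    rfl
  have hux : ∀ v ∈ S, (G'.Adj x v ↔ G.Adj x v) := by
    intro v hv
    obtain ⟨h1, h2⟩ := hmemS v hv
    rw [hadj']
    constructor
    · rintro (h | ⟨-, rfl⟩ | ⟨rfl, -⟩)
      · exact h
      · exact absurd rfl h2
      · exact absurd rfl hxy
    · exact fun h => Or.inl h
  have huy : ∀ v ∈ S, (G'.Adj y v ↔ G.Adj y v) := by
    intro v hv
    obtain ⟨h1, h2⟩ := hmemS v hv
    rw [hadj']
    constructor
    · rintro (h | ⟨rfl, -⟩ | ⟨-, rfl⟩)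
      · exact h
      · exact absurd rfl hxy.symm
      · exact absurd rfl h1
    · exact fun h => Or.inl h
  have hbx := hgen x hdx' hdx hux hfx
  have hby := hgen y hdy' hdy huy hfy
  have hsum : ∑ u, ∑ v, D u v = 2 * ABC G' - 2 * ABC G := by
    rw [ABC_eq G, ABC_eq G']
    simp only [hD, hT, hT', Finset.sum_sub_distrib]
    ring
  have hg := gain hdx hdy
  have final : 0 < 2 * ABC G' - 2 * ABC G := by
    rw [← hsum, key, hDxy]
    linarith
  linarith

end Basics
section Mono
variable {V : Type*} [Fintype V]
open scoped Classical

lemma one_le_deg_of_connected {G : SimpleGraph V} (h : G.Connected)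
    (hcard : 1 < Fintype.card V) (v : V) : 1 ≤ deg G v := by
  obtain ⟨w, hw⟩ := Fintype.exists_ne_of_one_lt_card hcard v
  obtain ⟨p⟩ := h.preconnected v w
  cases p with
  | nil => exact absurd rfl hw
  | cons h' _ => exact one_le_deg_of_adj h'

lemma ABC_mono_aux : ∀ (k : ℕ) (G H : SimpleGraph V),
    (H.edgeSet \ G.edgeSet).ncard = k → G ≤ H → G.Connected →
    ABC G ≤ ABC H ∧ (G ≠ H → ABC G < ABC H) := by
  intro k
  induction k with
  | zero =>
    intro G H hcard hle hconn
    have hemp : H.edgeSet \ G.edgeSet = ∅ :=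
      (Set.ncard_eq_zero (Set.toFinite _)).mp hcard
    have hsub : H.edgeSet ⊆ G.edgeSet := by
      intro e he
      by_contra hne
      exact absurd (hemp ▸ Set.mem_diff_of_mem he hne) (Set.notMem_empty e)
    have : G = H := SimpleGraph.edgeSet_inj.mp
      (Set.Subset.antisymm (SimpleGraph.edgeSet_mono hle) hsub)
    subst this
    exact ⟨le_refl _, fun h => absurd rfl h⟩
  | succ k ih =>
    intro G H hcard hle hconn
    have hne : (H.edgeSet \ G.edgeSet).Nonempty := by
      rw [Set.nonempty_iff_ne_empty]
      intro hc
      rw [hc, Set.ncard_empty] at hcard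
      omega
    have hex : ∃ x y, s(x, y) ∈ H.edgeSet \ G.edgeSet := by
      obtain ⟨e, he⟩ := hne
      exact Sym2.exists.mp ⟨e, he⟩
    obtain ⟨x, y, he⟩ := hex
    obtain ⟨hH', hG'⟩ := he
    rw [SimpleGraph.mem_edgeSet] at hH'
    have hG2 : ¬ G.Adj x y := fun hc => hG' (G.mem_edgeSet.mpr hc)
    have hxy : x ≠ y := hH'.ne
    have hcard2 : 1 < Fintype.card V := Fintype.one_lt_card_iff.mpr ⟨x, y, hxy⟩
    have hG1le : G ⊔ SimpleGraph.edge x y ≤ H := by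
      apply sup_le hle
      intro u v huv
      rw [SimpleGraph.edge_adj] at huv
      rcases huv.1 with ⟨rfl, rfl⟩ | ⟨rfl, rfl⟩
      · exact hH'
      · exact hH'.symm
    have hstep : ABC G < ABC (G ⊔ SimpleGraph.edge x y) :=
      ABC_lt_addEdge G hxy hG2 (one_le_deg_of_connected hconn hcard2 x)
        (one_le_deg_of_connected hconn hcard2 y)
    have hG1conn : (G ⊔ SimpleGraph.edge x y).Connected := hconn.mono le_sup_left
    have hG1edge : (G ⊔ SimpleGraph.edge x y).edgeSet = insert s(x, y) G.edgeSet := by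
      rw [SimpleGraph.edgeSet_sup, SimpleGraph.edge_edgeSet_of_ne hxy, Set.union_singleton]
    have hcard' : (H.edgeSet \ (G ⊔ SimpleGraph.edge x y).edgeSet).ncard = k := by
      rw [hG1edge]
      have hseteq : H.edgeSet \ insert s(x, y) G.edgeSet
          = (H.edgeSet \ G.edgeSet) \ {s(x, y)} := by
        ext e
        simp only [Set.mem_diff, Set.mem_insert_iff, Set.mem_singleton_iff]
        tauto
      rw [hseteq, Set.ncard_diff_singleton_of_mem
        (Set.mem_diff_of_mem (H.mem_edgeSet.mpr hH') hG'), hcard]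
      omega
    obtain ⟨h1, -⟩ := ih (G ⊔ SimpleGraph.edge x y) H hcard' hG1le hG1conn
    exact ⟨le_of_lt (lt_of_lt_of_le hstep h1), fun _ => lt_of_lt_of_le hstep h1⟩

lemma ABC_mono {G H : SimpleGraph V} (hle : G ≤ H) (hconn : G.Connected) :
    ABC G ≤ ABC H ∧ (G ≠ H → ABC G < ABC H) :=
  ABC_mono_aux _ G H rfl hle hconn

end Mono

section Iso
open scoped Classical

lemma ABC_eq' {V : Type*} [Fintype V] (G : SimpleGraph V) :
    ABC G = (∑ u : V, ∑ v : V, if G.Adj u v then fB (deg G u) (deg G v) else 0) / 2 := rfl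

lemma deg_iso {V W : Type*} {G : SimpleGraph V} {H : SimpleGraph W} (e : G ≃g H) (v : V) :
    deg H (e v) = deg G v := by
  rw [deg, deg]
  apply Nat.card_congr
  exact (Equiv.subtypeEquiv e.toEquiv (fun w => e.map_adj_iff.symm)).symm

lemma ABC_iso {V W : Type*} [Fintype V] [Fintype W] {G : SimpleGraph V} {H : SimpleGraph W}
    (e : G ≃g H) : ABC G = ABC H := by
  rw [ABC_eq', ABC_eq']
  congr 1
  apply Fintype.sum_equiv e.toEquiv
  intro u
  apply Fintype.sum_equiv e.toEquiv
  intro v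
  have hdu := deg_iso e u
  have hdv := deg_iso e v
  refine if_congr e.map_adj_iff.symm ?_ rfl
  show fB ((deg G u : ℕ) : ℝ) ((deg G v : ℕ) : ℝ) = fB ((deg H (e u) : ℕ) : ℝ) ((deg H (e v) : ℕ) : ℝ)
  rw [hdu, hdv]

end Iso


section Split
open scoped Classical
variable {n β : ℕ}

lemma cardP (hβn : β ≤ n) :
    (Finset.univ.filter (fun v : Fin n => v.val < β)).card = β := by
  have : Finset.univ.filter (fun v : Fin n => v.val < β)
      = Finset.map (Fin.castLEEmb hβn) Finset.univ := by
    ext w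
    simp only [Finset.mem_filter, Finset.mem_univ, true_and, Finset.mem_map]
    constructor
    · intro h; exact ⟨⟨w.val, h⟩, by ext; simp [Fin.castLEEmb]⟩
    · rintro ⟨i, rfl⟩; simpa [Fin.castLEEmb] using i.2
  rw [this, Finset.card_map, Finset.card_univ, Fintype.card_fin]

lemma cardQ (hβn : β ≤ n) :
    (Finset.univ.filter (fun v : Fin n => β ≤ v.val)).card = n - β := by
  have h1 := Finset.card_filter_add_card_filter_not
    (s := (Finset.univ : Finset (Fin n))) (p := fun v => v.val < β)
  have h2 : Finset.univ.filter (fun v : Fin n => ¬ v.val < β)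
      = Finset.univ.filter (fun v : Fin n => β ≤ v.val) := by
    apply Finset.filter_congr; intro v _; simp [not_lt]
  rw [cardP hβn, h2, Finset.card_univ, Fintype.card_fin] at h1
  omega

lemma deg_split (hβn : β ≤ n) (v : Fin n) :
    deg (splitGraph n β) v = if v.val < β then n - β else n - 1 := by
  by_cases hv : v.val < β
  · rw [if_pos hv, deg, Nat.card_coe_set_eq]
    have hset : {w | (splitGraph n β).Adj v w}
        = ↑(Finset.univ.filter (fun w : Fin n => β ≤ w.val)) := by
      ext w
      simp only [Set.mem_setOf_eq, Finset.coe_filter, Finset.mem_univ, true_and,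
        Set.mem_setOf_eq]
      constructor
      · rintro ⟨hne, h | h⟩
        · omega
        · exact h
      · intro h
        exact ⟨by intro hc; rw [hc] at hv; omega, Or.inr h⟩
    rw [hset, Set.ncard_coe_finset, cardQ hβn]
  · rw [if_neg hv, deg, Nat.card_coe_set_eq]
    have hset : {w | (splitGraph n β).Adj v w} = ↑(Finset.univ.erase v) := by
      ext w
      simp only [Set.mem_setOf_eq, Finset.coe_erase, Set.mem_diff, Finset.coe_univ,
        Set.mem_univ, true_and, Set.mem_singleton_iff]
      constructor
      · rintro ⟨hne, -⟩; exact fun hc => hne (hc ▸ rfl)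
      · intro h; exact ⟨fun hc => h (hc ▸ rfl), Or.inl (not_lt.mp hv)⟩
    rw [hset, Set.ncard_coe_finset, Finset.card_erase_of_mem (Finset.mem_univ v),
      Finset.card_univ, Fintype.card_fin]

lemma ABC_split (hn : 1 ≤ n) (hβn : β ≤ n) :
    ABC (splitGraph n β) = (β : ℝ) * ((n : ℝ) - β) *
        Real.sqrt ((2 * (n : ℝ) - β - 3) / (((n : ℝ) - β) * ((n : ℝ) - 1))) +
      (((n : ℝ) - β) * ((n : ℝ) - β - 1) / 2) *
        Real.sqrt ((2 * (n : ℝ) - 4) / (((n : ℝ) - 1) * ((n : ℝ) - 1))) := by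
  have hc1 : ((n - β : ℕ) : ℝ) = (n : ℝ) - β := by
    push_cast [hβn]; ring
  have hc2 : ((n - 1 : ℕ) : ℝ) = (n : ℝ) - 1 := by
    push_cast [hn]; ring
  set a : ℝ := fB ((n : ℝ) - β) ((n : ℝ) - 1) with ha
  set b : ℝ := fB ((n : ℝ) - 1) ((n : ℝ) - 1) with hb
  have hdegc : ∀ v : Fin n, ((deg (splitGraph n β) v : ℕ) : ℝ)
      = if v.val < β then (n : ℝ) - β else (n : ℝ) - 1 := by
    intro v
    rw [deg_split hβn]
    split_ifs
    · exact hc1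
    · exact hc2
  have hadj : ∀ u v : Fin n, (splitGraph n β).Adj u v ↔ u ≠ v ∧ (β ≤ u.val ∨ β ≤ v.val) :=
    fun u v => Iff.rfl
  rw [ABC_eq']
  have hinP : ∀ u : Fin n, u.val < β →
      (∑ v : Fin n, if (splitGraph n β).Adj u v then
        fB (deg (splitGraph n β) u) (deg (splitGraph n β) v) else 0)
      = ((n : ℝ) - β) * a := by
    intro u hu
    have hpt : ∀ v : Fin n, (if (splitGraph n β).Adj u v then
        fB (deg (splitGraph n β) u) (deg (splitGraph n β) v) else 0)
        = (if β ≤ v.val then a else 0) := by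
      intro v
      by_cases hv : β ≤ v.val
      · rw [if_pos hv, if_pos (by
          refine ⟨?_, Or.inr hv⟩
          intro hc; rw [hc] at hu; omega)]
        rw [show fB ((deg (splitGraph n β) u : ℕ) : ℝ) ((deg (splitGraph n β) v : ℕ) : ℝ)
          = fB ((n:ℝ) - β) ((n:ℝ) - 1) by rw [hdegc u, hdegc v, if_pos hu, if_neg (by omega)]]
      · rw [if_neg hv, if_neg (by
          rintro ⟨-, h | h⟩
          · omega
          · exact hv h)]
    rw [Finset.sum_congr rfl (fun v _ => hpt v), Finset.sum_ite, Finset.sum_const,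
      Finset.sum_const_zero, add_zero, cardQ hβn, nsmul_eq_mul, hc1]
  have hinQ : ∀ u : Fin n, ¬ u.val < β →
      (∑ v : Fin n, if (splitGraph n β).Adj u v then
        fB (deg (splitGraph n β) u) (deg (splitGraph n β) v) else 0)
      = (β : ℝ) * a + (((n : ℝ) - β) * b - b) := by
    intro u hu
    have hpt : ∀ v : Fin n, (if (splitGraph n β).Adj u v then
        fB (deg (splitGraph n β) u) (deg (splitGraph n β) v) else 0)
        = (if v.val < β then a else (b - if v = u then b else 0)) := by
      intro v
      by_cases hv : v.val < β
      · rw [if_pos hv, if_pos (by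
          refine ⟨?_, Or.inl (by omega)⟩
          intro hc; subst hc; exact hu hv)]
        rw [show fB ((deg (splitGraph n β) u : ℕ) : ℝ) ((deg (splitGraph n β) v : ℕ) : ℝ)
          = fB ((n:ℝ) - 1) ((n:ℝ) - β) by rw [hdegc u, hdegc v, if_pos hv, if_neg hu]]
        rw [fB_comm]
      · rw [if_neg hv]
        by_cases hvu : v = u
        · rw [if_neg (by rintro ⟨hne, -⟩; exact hne hvu.symm), if_pos hvu, sub_self]
        · rw [if_pos ⟨fun hc => hvu hc.symm, Or.inl (by omega)⟩, if_neg hvu, sub_zero]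
          rw [show fB ((deg (splitGraph n β) u : ℕ) : ℝ) ((deg (splitGraph n β) v : ℕ) : ℝ)
            = fB ((n:ℝ) - 1) ((n:ℝ) - 1) by rw [hdegc u, hdegc v, if_neg hv, if_neg hu]]
    rw [Finset.sum_congr rfl (fun v _ => hpt v), Finset.sum_ite, Finset.sum_const,
      nsmul_eq_mul, cardP hβn]
    have : ∑ v ∈ Finset.univ.filter (fun v : Fin n => ¬ v.val < β),
        (b - if v = u then b else 0)
        = ((n : ℝ) - β) * b - b := by
      rw [Finset.sum_sub_distrib, Finset.sum_const, nsmul_eq_mul]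
      have hQc : (Finset.univ.filter (fun v : Fin n => ¬ v.val < β)).card = n - β := by
        rw [show (Finset.univ.filter (fun v : Fin n => ¬ v.val < β))
          = (Finset.univ.filter (fun v : Fin n => β ≤ v.val)) from
          Finset.filter_congr (fun v _ => by simp [not_lt]), cardQ hβn]
      rw [hQc, hc1]
      congr 1
      rw [Finset.sum_ite_eq' _ u (fun _ => b), if_pos (by simp [not_lt.mp hu])]
    rw [this]
  rw [← Finset.sum_filter_add_sum_filter_not Finset.univ (fun u : Fin n => u.val < β)]
  rw [Finset.sum_congr rfl (fun u hu => hinP u (Finset.mem_filter.mp hu).2),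
    Finset.sum_congr rfl (fun u hu => hinQ u (Finset.mem_filter.mp hu).2)]
  rw [Finset.sum_const, Finset.sum_const, cardP hβn, nsmul_eq_mul, nsmul_eq_mul]
  have hQc2 : (Finset.univ.filter (fun v : Fin n => ¬ v.val < β)).card = n - β := by
    rw [show (Finset.univ.filter (fun v : Fin n => ¬ v.val < β))
      = (Finset.univ.filter (fun v : Fin n => β ≤ v.val)) from
      Finset.filter_congr (fun v _ => by simp [not_lt]), cardQ hβn]
  rw [hQc2, hc1]
  have hae : a = Real.sqrt ((2 * (n : ℝ) - β - 3) / (((n : ℝ) - β) * ((n : ℝ) - 1))) := by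
    rw [ha]; unfold fB; congr 2; ring
  have hbe : b = Real.sqrt ((2 * (n : ℝ) - 4) / (((n : ℝ) - 1) * ((n : ℝ) - 1))) := by
    rw [hb]; unfold fB; congr 2; ring
  rw [hae, hbe]
  ring

end Split

section Assemble
open scoped Classical

lemma exists_indep_card {V : Type*} [Fintype V] (G : SimpleGraph V) :
    ∃ s : Finset V, (∀ u ∈ s, ∀ v ∈ s, u ≠ v → ¬ G.Adj u v) ∧ s.card = indepNum G := by
  obtain ⟨s, -, hs⟩ := Finset.exists_mem_eq_sup (Finset.univ : Finset (Finset V))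
    Finset.univ_nonempty
    (fun s : Finset V => if (∀ u ∈ s, ∀ v ∈ s, u ≠ v → ¬ G.Adj u v) then s.card else 0)
  by_cases h : (∀ u ∈ s, ∀ v ∈ s, u ≠ v → ¬ G.Adj u v)
  · exact ⟨s, h, by rw [indepNum, hs, if_pos h]⟩
  · refine ⟨∅, by simp, ?_⟩
    rw [Finset.card_empty, indepNum, hs, if_neg h]

lemma relabel {n β : ℕ} (s : Finset (Fin n)) (hs : s.card = β) :
    ∃ e : Fin n ≃ Fin n, ∀ v : Fin n, v ∈ s ↔ (e v).val < β := by
  have hβn : β ≤ n := by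
    rw [← hs]
    simpa using Finset.card_le_univ s
  have hcompl : (Finset.univ.filter (fun a : Fin n => ¬ a ∈ s)).card = n - β := by
    have := Finset.card_filter_add_card_filter_not
      (s := (Finset.univ : Finset (Fin n))) (p := fun a => a ∈ s)
    have h2 : Finset.univ.filter (fun a : Fin n => a ∈ s) = s := by
      ext a; simp
    rw [h2, hs, Finset.card_univ, Fintype.card_fin] at this
    omega
  have e1 : {a // a ∈ s} ≃ Fin β := s.equivFinOfCardEq hs
  have e2 : {a // ¬ a ∈ s} ≃ Fin (n - β) := by
    refine Equiv.trans ?_ ((Finset.univ.filter (fun a : Fin n => ¬ a ∈ s)).equivFinOfCardEq hcompl)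
    exact Equiv.subtypeEquivRight (fun a => by simp)
  refine ⟨((Equiv.sumCompl (· ∈ s)).symm.trans
    ((Equiv.sumCongr e1 e2).trans (finSumFinEquiv.trans (finCongr (by omega))))), ?_⟩
  intro v
  by_cases hv : v ∈ s
  · simp only [Equiv.trans_apply, Equiv.sumCompl_symm_apply_of_pos hv,
      Equiv.sumCongr_apply, Sum.map_inl, finSumFinEquiv_apply_left, finCongr_apply,
      Fin.coe_cast, Fin.coe_castAdd]
    exact iff_of_true hv (e1 ⟨v, hv⟩).2
  · simp only [Equiv.trans_apply, Equiv.sumCompl_symm_apply_of_neg hv,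
      Equiv.sumCongr_apply, Sum.map_inr, finSumFinEquiv_apply_right, finCongr_apply,
      Fin.coe_cast, Fin.coe_natAdd]
    exact iff_of_false hv (by omega)

theorem abc_max_indepNum {n β : ℕ} (G : SimpleGraph (Fin n))
    (hconn : G.Connected) (hβ : indepNum G = β) :
    ABC G ≤ (β : ℝ) * ((n : ℝ) - β) *
        Real.sqrt ((2 * (n : ℝ) - β - 3) / (((n : ℝ) - β) * ((n : ℝ) - 1))) +
      (((n : ℝ) - β) * ((n : ℝ) - β - 1) / 2) *
        Real.sqrt ((2 * (n : ℝ) - 4) / (((n : ℝ) - 1) * ((n : ℝ) - 1))) ∧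
    (ABC G = (β : ℝ) * ((n : ℝ) - β) *
        Real.sqrt ((2 * (n : ℝ) - β - 3) / (((n : ℝ) - β) * ((n : ℝ) - 1))) +
      (((n : ℝ) - β) * ((n : ℝ) - β - 1) / 2) *
        Real.sqrt ((2 * (n : ℝ) - 4) / (((n : ℝ) - 1) * ((n : ℝ) - 1))) ↔
      Nonempty (G ≃g splitGraph n β)) := by
  have hn : 1 ≤ n := by
    have : Nonempty (Fin n) := hconn.nonempty
    exact Fin.pos_iff_nonempty.mpr this
  obtain ⟨s, hind, hcard⟩ := exists_indep_card G
  rw [hβ] at hcard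
  have hβn : β ≤ n := by
    rw [← hcard]
    simpa using Finset.card_le_univ s
  obtain ⟨e, he⟩ := relabel s hcard
  set G' : SimpleGraph (Fin n) := SimpleGraph.comap (⇑e.symm) G with hG'
  have hiso : G ≃g G' := by
    refine ⟨e, ?_⟩
    intro a b
    show G.Adj (e.symm (e a)) (e.symm (e b)) ↔ G.Adj a b
    rw [Equiv.symm_apply_apply, Equiv.symm_apply_apply]
  have hle : G' ≤ splitGraph n β := by
    intro u v huv
    have hadj : G.Adj (e.symm u) (e.symm v) := huv
    refine ⟨?_, ?_⟩
    · intro hc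
      exact hadj.ne (by rw [hc])
    · by_contra hc
      push_neg at hc
      obtain ⟨h1, h2⟩ := hc
      have hu : e.symm u ∈ s := by
        rw [he (e.symm u), Equiv.apply_symm_apply]
        omega
      have hv : e.symm v ∈ s := by
        rw [he (e.symm v), Equiv.apply_symm_apply]
        omega
      exact hind _ hu _ hv (fun hc2 => hadj.ne hc2) hadj
  have hconn' : G'.Connected := (SimpleGraph.Iso.connected_iff hiso).mp hconn
  have hmono := ABC_mono hle hconn'
  have hABCeq : ABC G = ABC G' := ABC_iso hiso
  have hsplit := ABC_split (n := n) (β := β) hn hβn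
  constructor
  · rw [hABCeq, ← hsplit]
    exact hmono.1
  · constructor
    · intro heq
      have : G' = splitGraph n β := by
        by_contra hne
        have := hmono.2 hne
        rw [← hABCeq, heq, ← hsplit] at this
        exact lt_irrefl _ this
      exact ⟨this ▸ hiso⟩
    · rintro ⟨f⟩
      rw [ABC_iso f, hsplit]

end Assemble
end

section
/- The ABC index of the graph obtained by joining the empty graph on β vertices with K_{n-β} (for 1 ≤ β ≤ n-1) equals β(n-β)·sqrt((2n-β-3)/((n-β)(n-1))) + ((n-β)(n-β-1)/2)·sqrt((2n-4)/(n-1)²). -/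
lemma card_filter_lt (n β : ℕ) (h : β ≤ n) :
    (Finset.univ.filter (fun i : Fin n => i.val < β)).card = β := by
  rcases h.lt_or_eq with h' | h'
  · have : Finset.univ.filter (fun i : Fin n => i.val < β) = Finset.Iio ⟨β, h'⟩ := by
      ext i; simp [Fin.lt_def]
    rw [this, Fin.card_Iio]
  · have : Finset.univ.filter (fun i : Fin n => i.val < β) = Finset.univ := by
      ext i
      simp only [Finset.mem_filter, Finset.mem_univ, true_and, iff_true]
      have := i.isLt; omega
    rw [this, Finset.card_univ, Fintype.card_fin, h']

lemma card_filter_ge (n β : ℕ) (h : β ≤ n) :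
    (Finset.univ.filter (fun i : Fin n => β ≤ i.val)).card = n - β := by
  classical
  have h2 := Finset.card_filter_add_card_filter_not
    (s := (Finset.univ : Finset (Fin n))) (p := fun i : Fin n => i.val < β)
  have h3 : Finset.univ.filter (fun i : Fin n => ¬ i.val < β)
      = Finset.univ.filter (fun i : Fin n => β ≤ i.val) := by
    ext i; simp only [Finset.mem_filter, Finset.mem_univ, true_and]; omega
  rw [h3, card_filter_lt n β h, Finset.card_univ, Fintype.card_fin] at h2
  omega

lemma deg_split_lt {n β : ℕ} {v : Fin n} (hv : v.val < β) (hβ : β ≤ n) :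
    deg (splitGraph n β) v = n - β := by
  classical
  have hset : {w | (splitGraph n β).Adj v w} = {w : Fin n | β ≤ w.val} := by
    ext w
    simp only [Set.mem_setOf_eq]
    show (v ≠ w ∧ (β ≤ v.val ∨ β ≤ w.val)) ↔ β ≤ w.val
    constructor
    · rintro ⟨-, h | h⟩
      · omega
      · exact h
    · intro h
      exact ⟨by intro e; subst e; omega, Or.inr h⟩
  rw [deg, hset, Nat.card_eq_fintype_card, Fintype.card_subtype]
  simp only [Set.mem_setOf_eq]
  exact card_filter_ge n β hβ

lemma deg_split_ge {n β : ℕ} {v : Fin n} (hv : β ≤ v.val) :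
    deg (splitGraph n β) v = n - 1 := by
  classical
  have hset : {w | (splitGraph n β).Adj v w} = {w : Fin n | w ≠ v} := by
    ext w
    simp only [Set.mem_setOf_eq]
    show (v ≠ w ∧ (β ≤ v.val ∨ β ≤ w.val)) ↔ w ≠ v
    constructor
    · rintro ⟨h, -⟩; exact h.symm
    · intro h; exact ⟨h.symm, Or.inl hv⟩
  rw [deg, hset, Nat.card_eq_fintype_card, Fintype.card_subtype]
  simp only [Set.mem_setOf_eq]
  rw [Finset.filter_ne', Finset.card_erase_of_mem (Finset.mem_univ v), Finset.card_univ,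
    Fintype.card_fin]

lemma sum_ite_const {n : ℕ} (c : ℝ) (p : Fin n → Prop) [DecidablePred p] :
    (∑ v : Fin n, if p v then c else 0) = ((Finset.univ.filter p).card : ℝ) * c := by
  rw [← Finset.sum_filter, Finset.sum_const, nsmul_eq_mul]

theorem abc_splitGraph {n β : ℕ} (hβ1 : 1 ≤ β) (hβn : β ≤ n - 1) :
    ABC (splitGraph n β) = (β : ℝ) * ((n : ℝ) - β) *
        Real.sqrt ((2 * (n : ℝ) - β - 3) / (((n : ℝ) - β) * ((n : ℝ) - 1))) +
      (((n : ℝ) - β) * ((n : ℝ) - β - 1) / 2) *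
        Real.sqrt ((2 * (n : ℝ) - 4) / (((n : ℝ) - 1) ^ 2)) := by
  classical
  have hn2 : 2 ≤ n := by omega
  have hβn' : β ≤ n := by omega
  have hβltn : β < n := by omega
  set A : ℝ := Real.sqrt ((2 * (n : ℝ) - β - 3) / (((n : ℝ) - β) * ((n : ℝ) - 1))) with hA
  set B : ℝ := Real.sqrt ((2 * (n : ℝ) - 4) / (((n : ℝ) - 1) ^ 2)) with hB
  have castnb : ((n - β : ℕ) : ℝ) = (n : ℝ) - β := by push_cast [Nat.cast_sub hβn']; ring
  have castn1 : ((n - 1 : ℕ) : ℝ) = (n : ℝ) - 1 := by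
    push_cast [Nat.cast_sub (by omega : 1 ≤ n)]; ring
  have key : ∀ u v : Fin n,
      (if (splitGraph n β).Adj u v then
        Real.sqrt (((deg (splitGraph n β) u : ℝ) + (deg (splitGraph n β) v : ℝ) - 2) /
          ((deg (splitGraph n β) u : ℝ) * (deg (splitGraph n β) v : ℝ)))
      else 0)
      = (if u.val < β ∧ β ≤ v.val then A else 0) + (if β ≤ u.val ∧ v.val < β then A else 0)
        + (if β ≤ u.val ∧ β ≤ v.val ∧ u ≠ v then B else 0) := by
    intro u v
    by_cases hu : u.val < β <;> by_cases hv : v.val < β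
    · have : ¬ (splitGraph n β).Adj u v := by
        rintro ⟨-, h | h⟩ <;> omega
      simp [this, hu, hv, not_le.mpr hu, not_le.mpr hv]
    · have hadj : (splitGraph n β).Adj u v :=
        ⟨by intro e; subst e; omega, Or.inr (le_of_not_gt hv)⟩
      rw [if_pos hadj, deg_split_lt hu hβn', deg_split_ge (le_of_not_gt hv)]
      rw [if_pos ⟨hu, le_of_not_gt hv⟩, if_neg (by omega), if_neg (by push_neg; intro h; omega)]
      rw [castnb, castn1, hA]
      norm_num
      congr 1
      ring
    · have hadj : (splitGraph n β).Adj u v :=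
        ⟨by intro e; subst e; omega, Or.inl (le_of_not_gt hu)⟩
      rw [if_pos hadj, deg_split_ge (le_of_not_gt hu), deg_split_lt hv hβn']
      rw [if_neg (by omega), if_pos ⟨le_of_not_gt hu, hv⟩, if_neg (by push_neg; intro h; omega)]
      rw [castnb, castn1, hA]
      norm_num
      congr 1
      ring
    · by_cases huv : u = v
      · subst huv
        simp [SimpleGraph.irrefl, hu]
      · have hadj : (splitGraph n β).Adj u v := ⟨huv, Or.inl (le_of_not_gt hu)⟩
        rw [if_pos hadj, deg_split_ge (le_of_not_gt hu), deg_split_ge (le_of_not_gt hv)]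
        rw [if_neg (by omega), if_neg (by omega),
          if_pos ⟨le_of_not_gt hu, le_of_not_gt hv, huv⟩, castn1, hB]
        norm_num
        congr 1
        ring
  rw [ABC]
  have main : (∑ u : Fin n, ∑ v : Fin n, if (splitGraph n β).Adj u v then
      Real.sqrt (((deg (splitGraph n β) u : ℝ) + (deg (splitGraph n β) v : ℝ) - 2) /
        ((deg (splitGraph n β) u : ℝ) * (deg (splitGraph n β) v : ℝ))) else 0)
      = (β : ℝ) * (((n : ℝ) - β) * A) + ((n : ℝ) - β) * ((β : ℝ) * A)
        + ((n : ℝ) - β) * ((((n : ℝ) - β) - 1) * B) := by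
    rw [Finset.sum_congr rfl fun u _ => Finset.sum_congr rfl fun v _ => key u v]
    simp only [Finset.sum_add_distrib]
    congr 1
    congr 1
    · -- cross A term 1
      have h1 : ∀ u : Fin n, (∑ v : Fin n, if u.val < β ∧ β ≤ v.val then A else 0)
          = if u.val < β then ((n : ℝ) - β) * A else 0 := by
        intro u
        by_cases hu : u.val < β
        · simp only [hu, true_and, if_true, sum_ite_const, card_filter_ge n β hβn', castnb]
        · simp [hu]
      rw [Finset.sum_congr rfl fun u _ => h1 u]
      simp only [sum_ite_const, card_filter_lt n β hβn']
    · have h2 : ∀ u : Fin n, (∑ v : Fin n, if β ≤ u.val ∧ v.val < β then A else 0)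
          = if β ≤ u.val then (β : ℝ) * A else 0 := by
        intro u
        by_cases hu : β ≤ u.val
        · simp only [hu, true_and, if_true, sum_ite_const, card_filter_lt n β hβn']
        · simp [hu]
      rw [Finset.sum_congr rfl fun u _ => h2 u]
      simp only [sum_ite_const, card_filter_ge n β hβn', castnb]
    · have h3 : ∀ u : Fin n, (∑ v : Fin n, if β ≤ u.val ∧ β ≤ v.val ∧ u ≠ v then B else 0)
          = if β ≤ u.val then (((n : ℝ) - β) - 1) * B else 0 := by
        intro u
        by_cases hu : β ≤ u.val
        · simp only [hu, true_and, if_true, sum_ite_const]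
          have hfe : Finset.univ.filter (fun v : Fin n => β ≤ v.val ∧ u ≠ v)
              = (Finset.univ.filter (fun v : Fin n => β ≤ v.val)).erase u := by
            ext i
            simp only [Finset.mem_filter, Finset.mem_univ, true_and, Finset.mem_erase]
            constructor
            · rintro ⟨h, hne⟩; exact ⟨fun e => hne e.symm, h⟩
            · rintro ⟨hne, h⟩; exact ⟨h, fun e => hne e.symm⟩
          rw [hfe, Finset.card_erase_of_mem (by simp [hu]), card_filter_ge n β hβn']
          have : ((n - β - 1 : ℕ) : ℝ) = ((n : ℝ) - β) - 1 := by
            push_cast [Nat.cast_sub (by omega : 1 ≤ n - β), Nat.cast_sub hβn']; ring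
          rw [this]
        · simp [hu]
      rw [Finset.sum_congr rfl fun u _ => h3 u]
      simp only [sum_ite_const, card_filter_ge n β hβn', castnb]
  rw [main]
  ring
end

section
/- Let G be a connected simple graph on n vertices (n even, n ≥ 2) with chromatic number χ(G) = 2. Then ABC(G) ≤ (n/2)·sqrt(n-2), with equality iff G is the complete bipartite graph K_{n/2,n/2}. -/
/-- The complete bipartite graph on `Fin n` with parts `{0, …, m-1}` and `{m, …, n-1}`. -/
def compBipartite (n m : ℕ) : SimpleGraph (Fin n) where
  Adj u v := (u.val < m) ≠ (v.val < m)
  symm := by constructor; intro u v h; exact h.symm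
  loopless := by constructor; intro u h; exact h rfl

open Finset SimpleGraph
open scoped Classical

lemma deg_eq_degree {V : Type*} [Fintype V] (G : SimpleGraph V) (v : V) :
    deg G v = G.degree v := by
  rw [← SimpleGraph.card_neighborSet_eq_degree]
  exact Nat.card_eq_fintype_card

lemma key_ineq {a b N : ℝ} (ha : 1 ≤ a) (hb : 1 ≤ b) (hab : a + b ≤ N) :
    Real.sqrt ((a + b - 2) / (a * b)) ≤ Real.sqrt (N - 2) * ((1/a + 1/b)/2) := by
  have ha0 : 0 < a := by linarith
  have hb0 : 0 < b := by linarith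
  have hN2 : (0:ℝ) ≤ N - 2 := by linarith
  have hs : (1/a + 1/b)/2 = (a+b)/(2*(a*b)) := by field_simp; ring
  rw [hs]
  have h1 : (a + b - 2) / (a * b) ≤ (N - 2) * ((a+b)/(2*(a*b)))^2 := by
    rw [div_pow, ← mul_div_assoc, div_le_div_iff₀ (by positivity) (by positivity)]
    have h4 : 4*(a*b) ≤ (a+b)^2 := by nlinarith [sq_nonneg (a-b)]
    have key := mul_le_mul (show a+b-2 ≤ N-2 by linarith) h4
      (by positivity) hN2
    nlinarith [mul_le_mul_of_nonneg_right key (le_of_lt (mul_pos ha0 hb0))]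
  calc Real.sqrt ((a+b-2)/(a*b)) ≤ Real.sqrt ((N-2) * ((a+b)/(2*(a*b)))^2) :=
        Real.sqrt_le_sqrt h1
    _ = Real.sqrt (N-2) * ((a+b)/(2*(a*b))) := by
        rw [Real.sqrt_mul hN2, Real.sqrt_sq (by positivity)]

lemma key_eq {a b N : ℝ} (ha : 1 ≤ a) (hb : 1 ≤ b) (hab : a + b ≤ N) (hN : 2 < N)
    (heq : Real.sqrt ((a + b - 2) / (a * b)) = Real.sqrt (N - 2) * ((1/a + 1/b)/2)) :
    a = b ∧ a + b = N := by
  have ha0 : 0 < a := by linarith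
  have hb0 : 0 < b := by linarith
  have hs : (1/a + 1/b)/2 = (a+b)/(2*(a*b)) := by field_simp; ring
  rw [hs, ← Real.sqrt_sq (show (0:ℝ) ≤ (a+b)/(2*(a*b)) by positivity),
    ← Real.sqrt_mul (by linarith : (0:ℝ) ≤ N - 2)] at heq
  have hE : (a + b - 2) / (a * b) = (N - 2) * ((a+b)/(2*(a*b)))^2 := by
    have h1 : (0:ℝ) ≤ (a + b - 2) / (a * b) := div_nonneg (by linarith) (by positivity)
    exact (Real.sqrt_inj h1 (mul_nonneg (by linarith) (sq_nonneg _))).mp heq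
  rw [div_pow, ← mul_div_assoc, div_eq_div_iff (by positivity) (by positivity)] at hE
  have h4 : 4*(a*b) ≤ (a+b)^2 := by nlinarith [sq_nonneg (a-b)]
  have hP : 0 < a*b := mul_pos ha0 hb0
  have hsq : (a-b)^2 = 0 := by
    have hle : (a-b)^2 ≤ 0 := by
      nlinarith [hE, mul_pos (show (0:ℝ) < N-2 by linarith) hP,
        mul_nonneg (by positivity : (0:ℝ) ≤ 4*(a*b)^2) (show (0:ℝ) ≤ N-(a+b) by linarith)]
    linarith [sq_nonneg (a-b)]
  have hab2 : a = b := by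
    have := sq_eq_zero_iff.mp hsq; linarith
  refine ⟨hab2, le_antisymm hab ?_⟩
  rw [← hab2] at hE ⊢
  nlinarith [hE, mul_pos (mul_pos (mul_pos ha0 ha0) ha0) ha0]

lemma card_filter_val_lt {n m : ℕ} (hmn : m < n) :
    (univ.filter (fun x : Fin n => x.val < m)).card = m := by
  have h : univ.filter (fun x : Fin n => x.val < m) = Finset.Iio (⟨m, hmn⟩ : Fin n) := by
    ext x; simp [Fin.lt_def]
  rw [h, Fin.card_Iio]

lemma ABC_regular {n : ℕ} (G : SimpleGraph (Fin n)) (k : ℕ) (hk : 0 < k) (hkn : 2 * k = n)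
    (h : ∀ v, G.degree v = k) : ABC G = ((n:ℝ)/2) * Real.sqrt ((n:ℝ) - 2) := by
  have hn2 : ((k:ℝ) + k - 2) = (n:ℝ) - 2 := by
    have hn : (n:ℝ) = 2*(k:ℝ) := by exact_mod_cast hkn.symm
    rw [hn]; ring
  have h2n : 2 ≤ n := by omega
  have hn2' : (0:ℝ) ≤ (n:ℝ) - 2 := by
    have : (2:ℝ) ≤ (n:ℝ) := by exact_mod_cast h2n
    linarith
  have hceq : Real.sqrt (((k:ℝ) + k - 2) / ((k:ℝ) * k)) = Real.sqrt ((n:ℝ)-2) / k := by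
    rw [hn2, show ((k:ℝ)*k) = (k:ℝ)^2 by ring, Real.sqrt_div hn2',
      Real.sqrt_sq (by positivity)]
  have hinner : ∀ u : Fin n,
      (∑ v : Fin n, if G.Adj u v then Real.sqrt ((n:ℝ)-2)/(k:ℝ) else 0)
        = Real.sqrt ((n:ℝ)-2) := by
    intro u
    rw [← Finset.sum_filter, Finset.sum_const, nsmul_eq_mul]
    have hdcard : (univ.filter (fun v => G.Adj u v)).card = k := by
      rw [← SimpleGraph.neighborFinset_eq_filter]; exact h u
    rw [hdcard]
    field_simp
  simp only [ABC, deg_eq_degree, h, hceq]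
  rw [Finset.sum_congr rfl (fun u _ => hinner u), Finset.sum_const, card_univ,
    Fintype.card_fin, nsmul_eq_mul]
  ring

theorem abc_max_chromatic_two_even {n : ℕ} (hn : 2 ≤ n) (heven : Even n)
    (G : SimpleGraph (Fin n)) (hconn : G.Connected)
    (hchi : G.chromaticNumber = 2) :
    ABC G ≤ ((n : ℝ) / 2) * Real.sqrt ((n : ℝ) - 2) ∧
    (ABC G = ((n : ℝ) / 2) * Real.sqrt ((n : ℝ) - 2) ↔
      Nonempty (G ≃g compBipartite n (n / 2))) := by
  classical
  obtain ⟨C⟩ : G.Colorable 2 := by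
    rw [← SimpleGraph.chromaticNumber_le_iff_colorable]
    exact_mod_cast hchi.le
  have hn1 : 1 < Fintype.card (Fin n) := by rw [Fintype.card_fin]; omega
  have hdpos : ∀ v : Fin n, 0 < G.degree v := by
    intro v
    rw [SimpleGraph.degree_pos_iff_exists_adj]
    obtain ⟨u, hu⟩ := Fintype.exists_ne_of_one_lt_card hn1 v
    obtain ⟨p⟩ := hconn.preconnected v u
    have hlen : 0 < p.length := by
      rcases Nat.eq_zero_or_pos p.length with h0 | h0
      · exact absurd (SimpleGraph.Walk.eq_of_length_eq_zero h0) (Ne.symm hu)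
      · exact h0
    exact ⟨p.getVert 1, by simpa using p.adj_getVert_succ hlen⟩
  have fin2a : ∀ x y z : Fin 2, x ≠ y → z ≠ x → z = y := by decide
  have hnsub : ∀ u v : Fin n, G.Adj u v → G.degree u + G.degree v ≤ n := by
    intro u v huv
    have hne := C.valid huv
    have h1 : G.neighborFinset u ⊆ univ.filter (fun w => C w = C v) := by
      intro w hw
      rw [SimpleGraph.mem_neighborFinset] at hw
      simp only [mem_filter, mem_univ, true_and]
      exact fin2a (C u) (C v) (C w) hne (Ne.symm (C.valid hw))
    have h2 : G.neighborFinset v ⊆ univ.filter (fun w => C w = C u) := by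
      intro w hw
      rw [SimpleGraph.mem_neighborFinset] at hw
      simp only [mem_filter, mem_univ, true_and]
      exact fin2a (C v) (C u) (C w) hne.symm (Ne.symm (C.valid hw))
    have e1 : G.degree u ≤ (univ.filter (fun w => C w = C v)).card := card_le_card h1
    have e2 : G.degree v ≤ (univ.filter (fun w => C w = C u)).card := card_le_card h2
    have hsplit : (univ.filter (fun w => C w = C v)).card
        + (univ.filter (fun w => C w = C u)).card = n := by
      have hcongr : univ.filter (fun w => C w = C u)
          = univ.filter (fun w => ¬ C w = C v) := by
        ext w
        simp only [mem_filter, mem_univ, true_and]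
        constructor
        · intro h hv; exact hne (h.symm.trans hv)
        · intro h; exact fin2a (C v) (C u) (C w) hne.symm h
      rw [hcongr, Finset.card_filter_add_card_filter_not, card_univ, Fintype.card_fin]
    omega
  set t : Fin n → Fin n → ℝ := fun u v =>
    Real.sqrt (((G.degree u : ℝ) + (G.degree v : ℝ) - 2)
      / ((G.degree u : ℝ) * (G.degree v : ℝ))) with ht
  set b : Fin n → Fin n → ℝ := fun u v =>
    Real.sqrt ((n:ℝ) - 2) * ((1/(G.degree u : ℝ) + 1/(G.degree v : ℝ))/2) with hb
  have hd1 : ∀ v : Fin n, (1:ℝ) ≤ (G.degree v : ℝ) := fun v => by exact_mod_cast hdpos v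
  have hptle : ∀ u v : Fin n,
      (if G.Adj u v then t u v else 0) ≤ (if G.Adj u v then b u v else 0) := by
    intro u v
    split_ifs with h
    · refine key_ineq (hd1 u) (hd1 v) ?_
      exact_mod_cast hnsub u v h
    · exact le_refl 0
  have hABC : ABC G = (∑ u : Fin n, ∑ v : Fin n, if G.Adj u v then t u v else 0) / 2 := by
    simp only [ABC, deg_eq_degree, ht]
  have hBrow : ∀ u : Fin n,
      (∑ v : Fin n, if G.Adj u v then (1/(G.degree u : ℝ)) else 0) = 1 := by
    intro u
    rw [← Finset.sum_filter, Finset.sum_const, nsmul_eq_mul]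
    have hdcard : (univ.filter (fun v => G.Adj u v)).card = G.degree u := by
      rw [← SimpleGraph.neighborFinset_eq_filter]; rfl
    rw [hdcard]
    have := hd1 u
    field_simp
  have hB1 : (∑ u : Fin n, ∑ v : Fin n, if G.Adj u v then (1/(G.degree u:ℝ)) else 0)
      = (n:ℝ) := by
    rw [Finset.sum_congr rfl (fun u _ => hBrow u), Finset.sum_const, card_univ,
      Fintype.card_fin, nsmul_eq_mul, mul_one]
  have hB2 : (∑ u : Fin n, ∑ v : Fin n, if G.Adj u v then (1/(G.degree v:ℝ)) else 0)
      = (n:ℝ) := by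
    rw [Finset.sum_comm]
    calc ∑ v : Fin n, ∑ u : Fin n, (if G.Adj u v then (1/(G.degree v:ℝ)) else 0)
        = ∑ v : Fin n, ∑ u : Fin n, (if G.Adj v u then (1/(G.degree v:ℝ)) else 0) := by
          refine Finset.sum_congr rfl fun v _ => Finset.sum_congr rfl fun u _ => ?_
          rw [SimpleGraph.adj_comm]
      _ = (n:ℝ) := hB1
  have hSb : (∑ u : Fin n, ∑ v : Fin n, if G.Adj u v then b u v else 0)
      = Real.sqrt ((n:ℝ) - 2) * n := by
    have hsplit : ∀ u v : Fin n, (if G.Adj u v then b u v else 0)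
        = Real.sqrt ((n:ℝ)-2)/2 * (if G.Adj u v then (1/(G.degree u:ℝ)) else 0)
          + Real.sqrt ((n:ℝ)-2)/2 * (if G.Adj u v then (1/(G.degree v:ℝ)) else 0) := by
      intro u v; split_ifs with h
      · simp only [hb]; ring
      · ring
    simp only [hsplit]
    simp only [Finset.sum_add_distrib, ← Finset.mul_sum]
    rw [hB1, hB2]; ring
  have hle2 : (∑ u : Fin n, ∑ v : Fin n, if G.Adj u v then t u v else 0)
      ≤ Real.sqrt ((n:ℝ)-2) * n := by
    rw [← hSb]
    exact Finset.sum_le_sum fun u _ => Finset.sum_le_sum fun v _ => hptle u v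
  have hineq : ABC G ≤ ((n:ℝ)/2) * Real.sqrt ((n:ℝ)-2) := by
    rw [hABC]; linarith [hle2]
  refine ⟨hineq, ?_, ?_⟩
  · -- equality → iso
    intro hEqv
    have hSt : (∑ u : Fin n, ∑ v : Fin n, if G.Adj u v then t u v else 0)
        = Real.sqrt ((n:ℝ)-2) * n := by
      rw [hABC] at hEqv; linarith [hEqv]
    have hrow : ∀ u ∈ (univ : Finset (Fin n)),
        (∑ v : Fin n, if G.Adj u v then t u v else 0)
          ≤ ∑ v : Fin n, if G.Adj u v then b u v else 0 :=
      fun u _ => Finset.sum_le_sum fun v _ => hptle u v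
    have hroweq := (Finset.sum_eq_sum_iff_of_le hrow).mp (hSt.trans hSb.symm)
    have hpteq : ∀ u v : Fin n,
        (if G.Adj u v then t u v else 0) = (if G.Adj u v then b u v else 0) := by
      intro u v
      exact (Finset.sum_eq_sum_iff_of_le (fun v _ => hptle u v)).mp
        (hroweq u (mem_univ u)) v (mem_univ v)
    have hteq : ∀ u v : Fin n, G.Adj u v → t u v = b u v := by
      intro u v h
      have := hpteq u v
      rwa [if_pos h, if_pos h] at this
    have hreg : ∀ v : Fin n, G.degree v = n / 2 := by
      intro v
      obtain ⟨u, hu⟩ := (G.degree_pos_iff_exists_adj v).mp (hdpos v)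
      rcases eq_or_lt_of_le hn with h2 | h2
      · have hlt := G.degree_lt_card_verts v
        rw [Fintype.card_fin] at hlt
        have := hdpos v
        omega
      · have h' := hteq v u hu
        simp only [ht, hb] at h'
        have hkey := key_eq (hd1 v) (hd1 u) (by exact_mod_cast hnsub v u hu)
          (by exact_mod_cast h2) h'
        have hsum : (G.degree v : ℝ) + (G.degree u : ℝ) = n := hkey.2
        have hvu : (G.degree v : ℝ) = (G.degree u : ℝ) := hkey.1
        have h2d : 2 * G.degree v = n := by
          have : ((2 * G.degree v : ℕ) : ℝ) = (n:ℝ) := by push_cast; linarith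
          exact_mod_cast this
        omega
    -- bipartition structure
    obtain ⟨k, hk⟩ := heven
    have fin2b : ∀ x y : Fin 2, x ≠ y → y ≠ 0 → x = 0 := by decide
    have hsubB : ∀ u : Fin n, C u = 0 →
        G.neighborFinset u ⊆ univ.filter (fun w : Fin n => ¬ C w = 0) := by
      intro u hu w hw
      rw [SimpleGraph.mem_neighborFinset] at hw
      rw [mem_filter]
      exact ⟨mem_univ w, fun h0 => C.valid hw (hu.trans h0.symm)⟩
    have hsubA : ∀ u : Fin n, ¬ C u = 0 →
        G.neighborFinset u ⊆ univ.filter (fun w : Fin n => C w = 0) := by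
      intro u hu w hw
      rw [SimpleGraph.mem_neighborFinset] at hw
      rw [mem_filter]
      exact ⟨mem_univ w, fin2b (C w) (C u) (Ne.symm (C.valid hw)) hu⟩
    have hABcard : (univ.filter (fun w : Fin n => C w = 0)).card
        + (univ.filter (fun w : Fin n => ¬ C w = 0)).card = n := by
      rw [Finset.card_filter_add_card_filter_not, card_univ, Fintype.card_fin]
    have v0 : Fin n := ⟨0, by omega⟩
    obtain ⟨w0, hw0⟩ := (G.degree_pos_iff_exists_adj v0).mp (hdpos v0)
    have hApair : ∃ u : Fin n, C u = 0 := by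
      by_cases h0 : C v0 = 0
      · exact ⟨v0, h0⟩
      · exact ⟨w0, fin2b (C w0) (C v0) (Ne.symm (C.valid hw0)) h0⟩
    have hBpair : ∃ u : Fin n, ¬ C u = 0 := by
      by_cases h0 : C v0 = 0
      · exact ⟨w0, fun hh => C.valid hw0 (h0.trans hh.symm)⟩
      · exact ⟨v0, h0⟩
    have hBge : n/2 ≤ (univ.filter (fun w : Fin n => ¬ C w = 0)).card := by
      obtain ⟨u, hu⟩ := hApair
      calc n/2 = G.degree u := (hreg u).symm
        _ = (G.neighborFinset u).card := rfl
        _ ≤ _ := card_le_card (hsubB u hu)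
    have hAge : n/2 ≤ (univ.filter (fun w : Fin n => C w = 0)).card := by
      obtain ⟨u, hu⟩ := hBpair
      calc n/2 = G.degree u := (hreg u).symm
        _ = (G.neighborFinset u).card := rfl
        _ ≤ _ := card_le_card (hsubA u hu)
    have hAcard : (univ.filter (fun w : Fin n => C w = 0)).card = n/2 := by omega
    have hBcard : (univ.filter (fun w : Fin n => ¬ C w = 0)).card = n/2 := by omega
    have hnbB : ∀ u : Fin n, C u = 0 →
        G.neighborFinset u = univ.filter (fun w : Fin n => ¬ C w = 0) := by
      intro u hu
      refine Finset.eq_of_subset_of_card_le (hsubB u hu) ?_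
      rw [hBcard]
      exact le_of_eq (hreg u).symm
    have hnbA : ∀ u : Fin n, ¬ C u = 0 →
        G.neighborFinset u = univ.filter (fun w : Fin n => C w = 0) := by
      intro u hu
      refine Finset.eq_of_subset_of_card_le (hsubA u hu) ?_
      rw [hAcard]
      exact le_of_eq (hreg u).symm
    have hadj : ∀ u v : Fin n, G.Adj u v ↔ C u ≠ C v := by
      intro u v
      constructor
      · exact C.valid
      · intro hne
        by_cases hu : C u = 0
        · have hvB : v ∈ univ.filter (fun w : Fin n => ¬ C w = 0) := by
            rw [mem_filter]
            exact ⟨mem_univ v, fun h0 => hne (hu.trans h0.symm)⟩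
          rw [← hnbB u hu] at hvB
          exact (SimpleGraph.mem_neighborFinset G u v).mp hvB
        · have hvA : v ∈ univ.filter (fun w : Fin n => C w = 0) := by
            rw [mem_filter]
            exact ⟨mem_univ v, fin2b (C v) (C u) (Ne.symm hne) hu⟩
          rw [← hnbA u hu] at hvA
          exact (SimpleGraph.mem_neighborFinset G u v).mp hvA
    -- build the isomorphism
    have hmn : n / 2 < n := by omega
    have cardLT : Fintype.card {x : Fin n // x.val < n/2} = n/2 := by
      rw [Fintype.card_subtype]
      exact card_filter_val_lt hmn
    have cardA' : Fintype.card {u : Fin n // C u = 0} = n/2 := by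
      rw [Fintype.card_subtype]
      exact hAcard
    have cardAc : Fintype.card {u : Fin n // ¬ C u = 0}
        = Fintype.card {x : Fin n // ¬ x.val < n/2} := by
      rw [Fintype.card_subtype_compl, Fintype.card_subtype_compl, cardA', cardLT]
    obtain ⟨e0⟩ : Nonempty ({u : Fin n // C u = 0} ≃ {x : Fin n // x.val < n/2}) :=
      ⟨Fintype.equivOfCardEq (cardA'.trans cardLT.symm)⟩
    obtain ⟨e1⟩ : Nonempty ({u : Fin n // ¬ C u = 0} ≃ {x : Fin n // ¬ x.val < n/2}) :=
      ⟨Fintype.equivOfCardEq cardAc⟩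
    have he : ∀ u : Fin n, (((Equiv.subtypeCongr e0 e1) u).val < n/2 ↔ C u = 0) := by
      intro u
      by_cases h : C u = 0
      · have h1 : (Equiv.subtypeCongr e0 e1) u = (e0 ⟨u, h⟩ : Fin n) := by
          simp [Equiv.subtypeCongr, h]
        rw [h1]
        exact iff_of_true (e0 ⟨u, h⟩).2 h
      · have h1 : (Equiv.subtypeCongr e0 e1) u = (e1 ⟨u, h⟩ : Fin n) := by
          simp [Equiv.subtypeCongr, h]
        rw [h1]
        exact iff_of_false (e1 ⟨u, h⟩).2 h
    have fin2c : ∀ x y : Fin 2, ((x = 0 ↔ y = 0) ↔ x = y) := by decide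
    refine ⟨⟨Equiv.subtypeCongr e0 e1, ?_⟩⟩
    intro u v
    show (((Equiv.subtypeCongr e0 e1) u).val < n/2) ≠ (((Equiv.subtypeCongr e0 e1) v).val < n/2)
      ↔ G.Adj u v
    rw [hadj u v]
    simp only [Ne, eq_iff_iff]
    exact not_congr ((iff_congr (he u) (he v)).trans (fin2c (C u) (C v)))
  · -- iso → equality
    rintro ⟨e⟩
    obtain ⟨k, hk⟩ := heven
    have hcompdeg : ∀ w : Fin n, (compBipartite n (n/2)).degree w = n/2 := by
      intro w
      have hfil : ((univ : Finset (Fin n)).filter (fun x => x.val < n/2)).card = n/2 :=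
        card_filter_val_lt (by omega)
      have hfil2 : ((univ : Finset (Fin n)).filter (fun x : Fin n => ¬ x.val < n/2)).card
          = n - n/2 := by
        have := Finset.card_filter_add_card_filter_not
          (s := (univ : Finset (Fin n))) (p := fun x : Fin n => x.val < n/2)
        rw [card_univ, Fintype.card_fin, hfil] at this
        omega
      have hdeg : (compBipartite n (n/2)).degree w
          = ((univ : Finset (Fin n)).filter ((compBipartite n (n/2)).Adj w)).card := by
        rw [← SimpleGraph.neighborFinset_eq_filter]; rfl
      by_cases hw : w.val < n/2
      · have hfe : (univ : Finset (Fin n)).filter ((compBipartite n (n/2)).Adj w)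
            = univ.filter (fun x : Fin n => ¬ x.val < n/2) := by
          ext x
          simp only [mem_filter, mem_univ, true_and]
          show ((w.val < n/2) ≠ (x.val < n/2)) ↔ ¬ (x.val < n/2)
          constructor
          · intro h hx; exact h (propext (iff_of_true hw hx))
          · intro h hh; exact h (hh ▸ hw)
        rw [hdeg, hfe, hfil2]
        omega
      · have hfe : (univ : Finset (Fin n)).filter ((compBipartite n (n/2)).Adj w)
            = univ.filter (fun x : Fin n => x.val < n/2) := by
          ext x
          simp only [mem_filter, mem_univ, true_and]
          show ((w.val < n/2) ≠ (x.val < n/2)) ↔ (x.val < n/2)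
          constructor
          · intro h
            by_contra hx
            exact h (propext (iff_of_false hw hx))
          · intro h hh; exact hw (hh ▸ h)
        rw [hdeg, hfe, hfil]
    have hdegG : ∀ v : Fin n, G.degree v = n/2 := by
      intro v
      have h1 : G.degree v = (compBipartite n (n/2)).degree (e v) := by
        rw [← SimpleGraph.card_neighborSet_eq_degree, ← SimpleGraph.card_neighborSet_eq_degree]
        exact Fintype.card_congr (e.mapNeighborSet v)
      rw [h1, hcompdeg]
    exact ABC_regular G (n/2) (by omega) (by omega) hdegG
end
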